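/- Let X be a Polish space and let 𝔓(X) denote the space of Borel probability measures on X equipped with the topology of weak convergence. Then the graph Γ_∼ = {(P,Q) ∈ 𝔓(X)×𝔓(X) : P ∼ Q} of the measure-equivalence relation is a Borel subset of 𝔓(X)×𝔓(X). -/

import Mathlib

open MeasureTheory
open scoped NNReal ENNReal

open Filter Topology TopologicalSpace Set in
/-- If every point of an open-approximating union of the family `g` is captured, then the
measure of `U` is bounded by `c` provided all finite subunions inside `U` have measure `≤ c`. -/
lemma aux_le_of_forall_finset {X : Type*} [MeasurableSpace X]
    (μ : Measure X) {U : Set X} {g : ℕ → Set X}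
    (hbU : U ⊆ ⋃ i ∈ {i | g i ⊆ U}, g i) {c : ℝ≥0∞}
    (h : ∀ t : Finset ℕ, (⋃ i ∈ t, g i) ⊆ U → μ (⋃ i ∈ t, g i) ≤ c) : μ U ≤ c := by
  classical
  set W : ℕ → Set X := fun n => ⋃ i ∈ (Finset.range n).filter (fun i => g i ⊆ U), g i with hW
  have hWU : ∀ n, W n ⊆ U := by
    intro n
    simp only [W, iUnion_subset_iff]
    intro i hi _ hx
    exact (Finset.mem_filter.1 hi).2 hx
  have hmono : Monotone W := by
    intro a b hab
    refine iUnion₂_subset fun i hi => ?_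
    refine subset_iUnion₂ (s := fun i (_ : i ∈ (Finset.range b).filter (fun i => g i ⊆ U)) => g i) i ?_
    rcases Finset.mem_filter.1 hi with ⟨hir, hiU⟩
    exact Finset.mem_filter.2 ⟨Finset.mem_range.2 (lt_of_lt_of_le (Finset.mem_range.1 hir) hab), hiU⟩
  have hunion : U ⊆ ⋃ n, W n := by
    intro x hx
    have := hbU hx
    simp only [mem_iUnion, mem_setOf_eq] at this
    obtain ⟨i, hiU, hxi⟩ := this
    refine mem_iUnion.2 ⟨i + 1, ?_⟩
    simp only [W, mem_iUnion]
    exact ⟨i, Finset.mem_filter.2 ⟨Finset.mem_range.2 (Nat.lt_succ_self i), hiU⟩, hxi⟩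
  have h1 : μ U ≤ μ (⋃ n, W n) := measure_mono hunion
  refine h1.trans ?_
  exact le_of_tendsto' (tendsto_measure_iUnion_atTop hmono)
    (fun n => h _ (hWU n))

open Filter Topology TopologicalSpace Set in
/-- ε-δ characterization of absolute continuity between finite Borel measures, tested only on
finite unions of a countable family of open sets forming a basis. -/
lemma aux_ac_iff {X : Type*} [TopologicalSpace X] [MeasurableSpace X] [BorelSpace X]
    (P Q : Measure X) [IsFiniteMeasure P] [Q.OuterRegular]
    {g : ℕ → Set X} (hg : ∀ i, IsOpen (g i))
    (hb : ∀ U : Set X, IsOpen U → U ⊆ ⋃ i ∈ {i | g i ⊆ U}, g i) :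
    P ≪ Q ↔ ∀ n : ℕ, ∃ m : ℕ, ∀ t : Finset ℕ,
      Q (⋃ i ∈ t, g i) < ((m : ℝ≥0∞) + 1)⁻¹ → P (⋃ i ∈ t, g i) ≤ ((n : ℝ≥0∞) + 1)⁻¹ := by
  constructor
  · intro hPQ n
    by_contra hcon
    push_neg at hcon
    choose t ht hP using hcon
    set ε : ℝ≥0∞ := ((n : ℝ≥0∞) + 1)⁻¹ with hε
    have hε0 : ε ≠ 0 :=
      ENNReal.inv_ne_zero.2 (ENNReal.add_ne_top.2 ⟨ENNReal.natCast_ne_top n, ENNReal.one_ne_top⟩)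
    -- extract a subsequence with geometrically small Q-measure
    set s : ℕ → Set X := fun m => ⋃ i ∈ t (2 ^ m), g i with hs
    have hsopen : ∀ m, IsOpen (s m) := fun m => isOpen_biUnion fun i _ => hg i
    have hQs : ∀ m, Q (s m) ≤ (2⁻¹ : ℝ≥0∞) ^ m := by
      intro m
      refine (ht (2 ^ m)).le.trans ?_
      have h1 : ((2 : ℝ≥0∞) ^ m) ≤ ((2 ^ m : ℕ) : ℝ≥0∞) + 1 := by
        push_cast
        exact le_self_add
      calc (((2 ^ m : ℕ) : ℝ≥0∞) + 1)⁻¹ ≤ ((2 : ℝ≥0∞) ^ m)⁻¹ :=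
            ENNReal.inv_le_inv' h1
        _ = (2⁻¹ : ℝ≥0∞) ^ m := by rw [ENNReal.inv_pow]
    have hPs : ∀ m, ε ≤ P (s m) := fun m => (hP (2 ^ m)).le
    -- the decreasing tails
    set A : ℕ → Set X := fun k => ⋃ m, s (m + k) with hA
    have hAopen : ∀ k, IsOpen (A k) := fun k => isOpen_iUnion fun m => hsopen _
    have hAmeas : ∀ k, MeasurableSet (A k) := fun k => (hAopen k).measurableSet
    have hAanti : Antitone A := by
      intro k k' hkk'
      refine iUnion_subset fun m => ?_
      have heq : m + k' = (m + (k' - k)) + k := by omega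
      rw [heq]
      exact subset_iUnion (fun m => s (m + k)) (m + (k' - k))
    set C : ℝ≥0∞ := ∑' m : ℕ, (2⁻¹ : ℝ≥0∞) ^ m with hC
    have hCne : C ≠ ∞ := by
      rw [hC, ENNReal.tsum_geometric, ENNReal.one_sub_inv_two]
      exact ENNReal.inv_ne_top.2 (by norm_num)
    have hQA : ∀ k, Q (A k) ≤ C * (2⁻¹ : ℝ≥0∞) ^ k := by
      intro k
      calc Q (A k) ≤ ∑' m : ℕ, Q (s (m + k)) := measure_iUnion_le _
        _ ≤ ∑' m : ℕ, (2⁻¹ : ℝ≥0∞) ^ (m + k) := ENNReal.tsum_le_tsum fun m => hQs (m + k)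
        _ = ∑' m : ℕ, (2⁻¹ : ℝ≥0∞) ^ m * (2⁻¹ : ℝ≥0∞) ^ k := by
            simp_rw [pow_add]
        _ = C * (2⁻¹ : ℝ≥0∞) ^ k := by rw [ENNReal.tsum_mul_right]
    have hPA : ∀ k, ε ≤ P (A k) := by
      intro k
      refine (hPs k).trans (measure_mono ?_)
      have := subset_iUnion (fun m => s (m + k)) 0
      simpa using this
    -- limits
    have htendQ : Tendsto (fun k => C * (2⁻¹ : ℝ≥0∞) ^ k) atTop (𝓝 0) := by
      have hpow : Tendsto (fun k => (2⁻¹ : ℝ≥0∞) ^ k) atTop (𝓝 0) :=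
        ENNReal.tendsto_pow_atTop_nhds_zero_of_lt_one (by norm_num)
      simpa using ENNReal.Tendsto.const_mul hpow (Or.inr hCne)
    have hQinter : Q (⋂ k, A k) = 0 := by
      have hle : Q (⋂ k, A k) ≤ 0 := by
        refine ge_of_tendsto' htendQ fun k => ?_
        exact (measure_mono (iInter_subset A k)).trans (hQA k)
      exact le_antisymm hle zero_le
    have hPinter : ε ≤ P (⋂ k, A k) := by
      have htendP : Tendsto (P ∘ A) atTop (𝓝 (P (⋂ k, A k))) :=
        tendsto_measure_iInter_atTop (fun k => (hAmeas k).nullMeasurableSet) hAanti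
          ⟨0, measure_ne_top P _⟩
      exact ge_of_tendsto' htendP fun k => hPA k
    have := hPQ hQinter
    rw [this] at hPinter
    exact hε0 (le_antisymm hPinter zero_le)
  · intro h
    refine Measure.AbsolutelyContinuous.mk fun sSet hsSet hQ0 => ?_
    by_contra hP0
    obtain ⟨n, hn⟩ := ENNReal.exists_inv_nat_lt hP0
    have hn' : ((n : ℝ≥0∞) + 1)⁻¹ < P sSet :=
      lt_of_le_of_lt (ENNReal.inv_le_inv' le_self_add) hn
    obtain ⟨m, hm⟩ := h n
    have hpos : Q sSet < ((m : ℝ≥0∞) + 1)⁻¹ := by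
      rw [hQ0]
      refine ENNReal.inv_pos.2 ?_
      exact ENNReal.add_ne_top.2 ⟨ENNReal.natCast_ne_top m, ENNReal.one_ne_top⟩
    obtain ⟨U, hsU, hUopen, hQU⟩ := Set.exists_isOpen_lt_of_lt (μ := Q) sSet _ hpos
    have hPU : P U ≤ ((n : ℝ≥0∞) + 1)⁻¹ := by
      refine aux_le_of_forall_finset P (hb U hUopen) fun tt htt => ?_
      exact hm tt (lt_of_le_of_lt (measure_mono htt) hQU)
    exact absurd (le_trans (measure_mono hsU) hPU) (not_le.2 hn')

open Filter Topology TopologicalSpace Set in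
/-- Lower semicontinuity of the evaluation of probability measures on an open set,
with respect to the topology of weak convergence. -/
lemma aux_lsc {X : Type*} [MeasurableSpace X] [PseudoEMetricSpace X]
    [OpensMeasurableSpace X] {U : Set X} (hU : IsOpen U) :
    LowerSemicontinuous fun μ : ProbabilityMeasure X => (μ : Measure X) U := by
  rw [lowerSemicontinuous_iff_le_liminf]
  intro μ
  exact ProbabilityMeasure.le_liminf_measure_open_of_tendsto
    (tendsto_id (x := 𝓝 μ)) hU

open Filter Topology TopologicalSpace Set in
/-- **Borel measurability of the measure-equivalence relation.** Let `X` be a Polish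
space and let `𝔓(X)` be the space of Borel probability measures on `X` with the topology
of weak convergence. The graph `Γ_∼ = {(P,Q) : P ∼ Q}` of the measure-equivalence
relation (mutual absolute continuity) is a Borel subset of `𝔓(X) × 𝔓(X)`, i.e., it is
measurable for the Borel σ-algebra of the product topology. -/
theorem statement9 {X : Type*} [TopologicalSpace X] [PolishSpace X]
    [MeasurableSpace X] [BorelSpace X] :
    MeasurableSet[borel (ProbabilityMeasure X × ProbabilityMeasure X)]
      {p : ProbabilityMeasure X × ProbabilityMeasure X |
        (p.1 : Measure X) ≪ (p.2 : Measure X) ∧ (p.2 : Measure X) ≪ (p.1 : Measure X)} := by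
  letI := upgradeIsCompletelyMetrizable X
  -- enumerate a countable basis of open sets
  obtain ⟨g, hg⟩ : ∃ g : ℕ → Set X, insert ∅ (countableBasis X) = range g :=
    Set.Countable.exists_eq_range ((countable_countableBasis X).insert ∅)
      ⟨∅, mem_insert _ _⟩
  have hgopen : ∀ i, IsOpen (g i) := by
    intro i
    have : g i ∈ insert ∅ (countableBasis X) := hg ▸ mem_range_self i
    rcases this with h | h
    · rw [h]; exact isOpen_empty
    · exact isOpen_of_mem_countableBasis h
  have hb : ∀ U : Set X, IsOpen U → U ⊆ ⋃ i ∈ {i | g i ⊆ U}, g i := by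
    intro U hU x hx
    obtain ⟨V, hVb, hxV, hVU⟩ :=
      (isBasis_countableBasis X).exists_subset_of_mem_open hx hU
    have : V ∈ range g := hg ▸ mem_insert_of_mem _ hVb
    obtain ⟨i, hi⟩ := this
    simp only [mem_iUnion, mem_setOf_eq]
    exact ⟨i, by rw [hi]; exact hVU, by rw [hi]; exact hxV⟩
  -- Borel structure on the product
  letI : MeasurableSpace (ProbabilityMeasure X × ProbabilityMeasure X) :=
    borel (ProbabilityMeasure X × ProbabilityMeasure X)
  haveI : BorelSpace (ProbabilityMeasure X × ProbabilityMeasure X) := ⟨rfl⟩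
  show MeasurableSet _
  -- measurability of evaluations on finite unions of basis sets
  have hWopen : ∀ t : Finset ℕ, IsOpen (⋃ i ∈ t, g i) :=
    fun t => isOpen_biUnion fun i _ => hgopen i
  have hmeas1 : ∀ t : Finset ℕ,
      Measurable fun p : ProbabilityMeasure X × ProbabilityMeasure X =>
        (p.1 : Measure X) (⋃ i ∈ t, g i) := by
    intro t
    exact (LowerSemicontinuous.comp (aux_lsc (hWopen t)) continuous_fst).measurable
  have hmeas2 : ∀ t : Finset ℕ,
      Measurable fun p : ProbabilityMeasure X × ProbabilityMeasure X =>
        (p.2 : Measure X) (⋃ i ∈ t, g i) := by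
    intro t
    exact (LowerSemicontinuous.comp (aux_lsc (hWopen t)) continuous_snd).measurable
  -- rewrite the set using the ε-δ characterization
  have key : ∀ P Q : ProbabilityMeasure X,
      ((P : Measure X) ≪ (Q : Measure X) ↔ ∀ n : ℕ, ∃ m : ℕ, ∀ t : Finset ℕ,
        (Q : Measure X) (⋃ i ∈ t, g i) < ((m : ℝ≥0∞) + 1)⁻¹ →
          (P : Measure X) (⋃ i ∈ t, g i) ≤ ((n : ℝ≥0∞) + 1)⁻¹) :=
    fun P Q => aux_ac_iff (P : Measure X) (Q : Measure X) hgopen hb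
  have hset : {p : ProbabilityMeasure X × ProbabilityMeasure X |
        (p.1 : Measure X) ≪ (p.2 : Measure X) ∧ (p.2 : Measure X) ≪ (p.1 : Measure X)} =
      (⋂ n : ℕ, ⋃ m : ℕ, ⋂ t : Finset ℕ,
        ({p : ProbabilityMeasure X × ProbabilityMeasure X |
          (p.2 : Measure X) (⋃ i ∈ t, g i) < ((m : ℝ≥0∞) + 1)⁻¹}ᶜ ∪
         {p : ProbabilityMeasure X × ProbabilityMeasure X |
          (p.1 : Measure X) (⋃ i ∈ t, g i) ≤ ((n : ℝ≥0∞) + 1)⁻¹})) ∩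
      (⋂ n : ℕ, ⋃ m : ℕ, ⋂ t : Finset ℕ,
        ({p : ProbabilityMeasure X × ProbabilityMeasure X |
          (p.1 : Measure X) (⋃ i ∈ t, g i) < ((m : ℝ≥0∞) + 1)⁻¹}ᶜ ∪
         {p : ProbabilityMeasure X × ProbabilityMeasure X |
          (p.2 : Measure X) (⋃ i ∈ t, g i) ≤ ((n : ℝ≥0∞) + 1)⁻¹})) := by
    ext p
    simp only [mem_setOf_eq, mem_inter_iff, mem_iInter, mem_iUnion, mem_union, mem_compl_iff,
      not_lt, key p.1 p.2, key p.2 p.1]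
    constructor
    · rintro ⟨h1, h2⟩
      constructor
      · intro n
        obtain ⟨m, hm⟩ := h1 n
        exact ⟨m, fun t => by
          rcases le_or_gt (((m : ℝ≥0∞) + 1)⁻¹) ((p.2 : Measure X) (⋃ i ∈ t, g i)) with h | h
          · exact Or.inl h
          · exact Or.inr (hm t h)⟩
      · intro n
        obtain ⟨m, hm⟩ := h2 n
        exact ⟨m, fun t => by
          rcases le_or_gt (((m : ℝ≥0∞) + 1)⁻¹) ((p.1 : Measure X) (⋃ i ∈ t, g i)) with h | h
          · exact Or.inl h
          · exact Or.inr (hm t h)⟩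
    · rintro ⟨h1, h2⟩
      constructor
      · intro n
        obtain ⟨m, hm⟩ := h1 n
        exact ⟨m, fun t hlt => by
          rcases hm t with h | h
          · exact absurd hlt (not_lt.2 h)
          · exact h⟩
      · intro n
        obtain ⟨m, hm⟩ := h2 n
        exact ⟨m, fun t hlt => by
          rcases hm t with h | h
          · exact absurd hlt (not_lt.2 h)
          · exact h⟩
  rw [hset]
  refine MeasurableSet.inter ?_ ?_
  · refine MeasurableSet.iInter fun n => MeasurableSet.iUnion fun m =>
      MeasurableSet.iInter fun t => MeasurableSet.union ?_ ?_
    · exact ((hmeas2 t) measurableSet_Iio).compl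
    · exact (hmeas1 t) measurableSet_Iic
  · refine MeasurableSet.iInter fun n => MeasurableSet.iUnion fun m =>
      MeasurableSet.iInter fun t => MeasurableSet.union ?_ ?_
    · exact ((hmeas1 t) measurableSet_Iio).compl
    · exact (hmeas2 t) measurableSet_Iic
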